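/- Let n ≥ 4 and 1 ≤ i ≤ n-2, and set m = n-i-1. Then ∑_{k=1}^{i} (q_{n-k,m}/2)·(r_{n-k,m} + i - k + 1)·d_{k,n}·(i-k)! = (q_{n,m}/2)·(r_{n,m} + i + 1)·i!, where q_{l,m} and r_{l,m} denote the quotient and remainder of l divided by m, and d_{k,n} = |D_{k,n}|. -/

import Mathlib

/-- Vector of consecutive differences of a list. -/
def diffs (l : List ℕ) : List ℕ := List.zipWith (fun a b => b - a) l l.tail

/-- Δ(X): consecutive differences of the increasing enumeration of a finite set. -/
def setDiffs (X : Finset ℕ) : List ℕ := diffs (X.sort (· ≤ ·))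

/-- c̄(Δ) = {c, c+d₁, c+d₁+d₂, ...}. -/
def barSet (c : ℕ) (ds : List ℕ) : Finset ℕ :=
  ((List.range (ds.length + 1)).map (fun j => c + (ds.take j).sum)).toFinset

/-- A finite set (of cardinality ≥ 2) is periodic if its consecutive differences are constant. -/
def PeriodicSet (X : Finset ℕ) : Prop :=
  2 ≤ X.card ∧ ∃ d, 0 < d ∧ setDiffs X = List.replicate (X.card - 1) d

/-- A vector is periodic if all its entries are equal to some positive d. -/
def PerVec (v : List ℕ) : Prop := ∃ d, 0 < d ∧ v = List.replicate v.length d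

/-- Membership in D_{|u|,n}: injective word over [n], complement periodic,
no proper nonempty prefix has a periodic complement. -/
def MemD (n : ℕ) (u : List ℕ) : Prop :=
  u.Nodup ∧ (∀ x ∈ u, x ∈ Finset.Icc 1 n) ∧
  PeriodicSet (Finset.Icc 1 n \ u.toFinset) ∧
  ∀ j, 1 ≤ j → j < u.length → ¬ PeriodicSet (Finset.Icc 1 n \ (u.take j).toFinset)

/-- A list is a permutation word of [n]. -/
def IsPermList (n : ℕ) (s : List ℕ) : Prop :=
  s.length = n ∧ s.Nodup ∧ s.toFinset = Finset.Icc 1 n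

/-- s is the inverse permutation word of u (both permutations of [n]). -/
def InvPerm (n : ℕ) (u s : List ℕ) : Prop :=
  IsPermList n u ∧ IsPermList n s ∧
  ∀ j k, j < n → k < n → (u.getD j 0 = k + 1 ↔ s.getD k 0 = j + 1)

/-- Δ_i(s): consecutive differences of {s_i, ..., s_n} (1-indexed). -/
def deltaVec (s : List ℕ) (i : ℕ) : List ℕ := setDiffs (s.drop (i - 1)).toFinset

/-- One transition of a pyramidal sequence: merge two adjacent entries,
or delete the leftmost, or delete the rightmost entry. -/
def PyrStep (v w : List ℕ) : Prop :=
  (∃ l a b r, v = l ++ a :: b :: r ∧ w = l ++ (a + b) :: r) ∨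
  (∃ a r, v = a :: r ∧ w = r) ∨
  (∃ l a, v = l ++ [a] ∧ w = l)

/-- A pyramidal sequence of vectors of size n, encoded as a list [Δ₁, ..., Δ_{n-1}]. -/
def IsPyramidal (n : ℕ) (P : List (List ℕ)) : Prop :=
  P.length = n - 1 ∧ P.getD 0 [] = List.replicate (n - 1) 1 ∧
  ∀ i, i + 1 < n - 1 → PyrStep (P.getD i []) (P.getD (i + 1) [])

/-- A trapezoidal sequence of height i of size n, encoded as [Δ₁, ..., Δ_{i+1}]:
Δ_{i+1} periodic, Δ_j not periodic for 2 ≤ j ≤ i. -/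
def IsTrapezoidal (n i : ℕ) (T : List (List ℕ)) : Prop :=
  T.length = i + 1 ∧ T.getD 0 [] = List.replicate (n - 1) 1 ∧
  (∀ j, j < i → PyrStep (T.getD j []) (T.getD (j + 1) [])) ∧
  PerVec (T.getD i []) ∧
  ∀ j, 1 ≤ j → j < i → ¬ PerVec (T.getD j [])

/-- Non-interval permutation of [m]: no prefix of length l, 2 ≤ l < m, has as
letter set an interval of consecutive integers. -/
def IsNonIntervalPerm (m : ℕ) (s : List ℕ) : Prop :=
  IsPermList m s ∧ ∀ l, 2 ≤ l → l < m → ¬ ∃ a, (s.take l).toFinset = Finset.Icc a (a + l - 1)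

/-- v is obtained from u by a rigid shift of height h by k places to the left:
columns of height < h are untouched and receive nothing; each position of height ≥ h
receives the excess (over h) of the column k places to its right; every block strictly
above the cut lands on a column of height ≥ h. -/
def RigidShiftL (n h k : ℕ) (u v : List ℕ) : Prop :=
  IsPermList n u ∧ IsPermList n v ∧
  (∀ j, j < n → u.getD j 0 < h → v.getD j 0 = u.getD j 0) ∧
  (∀ j, j < n → h ≤ u.getD j 0 → v.getD j 0 = h + (u.getD (j + k) 0 - h)) ∧
  (∀ j, j < n → h < u.getD j 0 → k ≤ j ∧ h ≤ u.getD (j - k) 0)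

/-- Strong shift equivalence: finite sequences of rigid shifts (in either direction). -/
def StrongShiftEq (n : ℕ) (u v : List ℕ) : Prop :=
  Relation.ReflTransGen (fun a b => ∃ h k, RigidShiftL n h k a b ∨ RigidShiftL n h k b a) u v

/-- Shift equivalence: finite sequences of rigid shifts and reversals. -/
def ShiftEq (n : ℕ) (u v : List ℕ) : Prop :=
  Relation.ReflTransGen
    (fun a b => (∃ h k, RigidShiftL n h k a b ∨ RigidShiftL n h k b a) ∨ b = a.reverse) u v

/-- Super-strong Wilf equivalence of permutation words of [n], characterized by
equality of all Δ_i of the inverses. -/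
def SSWilf (n : ℕ) (u v : List ℕ) : Prop :=
  ∃ s t, InvPerm n u s ∧ InvPerm n v t ∧ ∀ i, 1 ≤ i → i ≤ n - 1 → deltaVec s i = deltaVec t i

-- AP lists and sets
def apList (c d N : ℕ) : List ℕ := (List.range N).map (fun t => c + t*d)

def apSet (c d N : ℕ) : Finset ℕ := (apList c d N).toFinset

lemma apList_succ (c d N : ℕ) : apList c d (N+1) = c :: apList (c+d) d N := by
  simp only [apList, List.range_succ_eq_map, List.map_cons, List.map_map]
  congr 1
  · simp
  · apply List.map_congr_left; intro t _; simp [Function.comp]; ring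

lemma apList_length (c d N : ℕ) : (apList c d N).length = N := by simp [apList]

lemma mem_apList {x c d N : ℕ} : x ∈ apList c d N ↔ ∃ t, t < N ∧ x = c + t*d := by
  simp [apList, eq_comm]

lemma apList_sorted (c d N : ℕ) (hd : 0 < d) : (apList c d N).Pairwise (· < ·) := by
  apply List.Pairwise.map
  · intro a b (h : a < b)
    have : a*d < b*d := (Nat.mul_lt_mul_right hd).2 h
    omega
  · exact List.pairwise_lt_range (n := N)

lemma apList_nodup (c d N : ℕ) (hd : 0 < d) : (apList c d N).Nodup :=
  (apList_sorted c d N hd).nodup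

lemma sort_apSet (c d N : ℕ) (hd : 0 < d) : (apSet c d N).sort (· ≤ ·) = apList c d N :=
  (List.toFinset_sort (· ≤ ·) (apList_nodup c d N hd)).2 ((apList_sorted c d N hd).imp (fun h => le_of_lt h))

lemma card_apSet (c d N : ℕ) (hd : 0 < d) : (apSet c d N).card = N := by
  rw [apSet, List.card_toFinset, (apList_nodup c d N hd).dedup, apList_length]

lemma mem_apSet {x c d N : ℕ} : x ∈ apSet c d N ↔ ∃ t, t < N ∧ x = c + t*d := by
  rw [apSet, List.mem_toFinset, mem_apList]

lemma diffs_cons_cons (a b : ℕ) (l : List ℕ) :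
    diffs (a :: b :: l) = (b - a) :: diffs (b :: l) := rfl

lemma diffs_apList (d : ℕ) : ∀ N c, diffs (apList c d N) = List.replicate (N-1) d := by
  intro N
  induction N with
  | zero => intro c; rfl
  | succ N ih =>
    intro c
    cases N with
    | zero => rfl
    | succ M =>
      rw [apList_succ, apList_succ, diffs_cons_cons, ← apList_succ, ih]
      simp [List.replicate_succ]

lemma setDiffs_apSet (c d N : ℕ) (hd : 0 < d) :
    setDiffs (apSet c d N) = List.replicate (N-1) d := by
  rw [setDiffs, sort_apSet c d N hd, diffs_apList]

lemma periodic_apSet (c d N : ℕ) (hd : 0 < d) (hN : 2 ≤ N) : PeriodicSet (apSet c d N) := by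
  refine ⟨by rw [card_apSet c d N hd]; exact hN, d, hd, ?_⟩
  rw [card_apSet c d N hd, setDiffs_apSet c d N hd]

lemma sorted_diffs_eq_apList (d : ℕ) :
    ∀ L : List ℕ, L.Pairwise (· ≤ ·) → diffs L = List.replicate (L.length - 1) d →
      L = apList (L.headD 0) d L.length := by
  intro L
  induction L with
  | nil => intro _ _; rfl
  | cons a t ih =>
    intro hs hdf
    cases t with
    | nil => simp [apList, List.range_succ]
    | cons b t' =>
      rw [diffs_cons_cons] at hdf
      simp only [List.length_cons, Nat.add_sub_cancel, List.replicate_succ] at hdf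
      obtain ⟨h1, h2⟩ := List.cons_eq_cons.mp hdf
      have hab : a ≤ b := (List.pairwise_cons.mp hs).1 b (by simp)
      have hb : b = a + d := by omega
      have := ih (List.pairwise_cons.mp hs).2 (by simpa using h2)
      simp only [List.headD_cons] at this ⊢
      rw [List.length_cons, apList_succ, ← hb, ← this]

lemma periodic_iff {X : Finset ℕ} :
    PeriodicSet X ↔ 2 ≤ X.card ∧ ∃ c d, 0 < d ∧ X = apSet c d X.card := by
  constructor
  · rintro ⟨hcard, d, hd, hdf⟩
    refine ⟨hcard, (X.sort (· ≤ ·)).headD 0, d, hd, ?_⟩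
    have hlen : (X.sort (· ≤ ·)).length = X.card := Finset.length_sort _
    have := sorted_diffs_eq_apList d (X.sort (· ≤ ·)) (Finset.pairwise_sort _ _)
      (by rw [hlen]; exact hdf)
    rw [hlen] at this
    conv_lhs => rw [← Finset.sort_toFinset (s := X) (r := (· ≤ ·)), this]
    rfl
  · rintro ⟨hcard, c, d, hd, hX⟩
    rw [hX]; exact periodic_apSet c d X.card hd hcard

lemma apSet_inj {c d c' d' N : ℕ} (hd : 0 < d) (hd' : 0 < d') (hN : 2 ≤ N)
    (h : apSet c d N = apSet c' d' N) : c = c' ∧ d = d' := by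
  obtain ⟨M, rfl⟩ : ∃ M, N = M + 2 := ⟨N - 2, by omega⟩
  have := congrArg (fun s : Finset ℕ => s.sort (· ≤ ·)) h
  rw [sort_apSet _ _ _ hd, sort_apSet _ _ _ hd'] at this
  rw [apList_succ, apList_succ, apList_succ, apList_succ] at this
  simp only [List.cons_eq_cons] at this
  omega

lemma subAP {c d N s : ℕ} (hd : 0 < d) (hs : 2 ≤ s) (Y : Finset ℕ) :
    (Y ⊆ apSet c d N ∧ PeriodicSet Y ∧ Y.card = s) ↔
      ∃ a e, 1 ≤ e ∧ a + (s-1)*e ≤ N-1 ∧ Y = apSet (c+a*d) (e*d) s := by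
  constructor
  · rintro ⟨hsub, hper, hcard⟩
    obtain ⟨-, c', d', hd', hY⟩ := periodic_iff.mp hper
    rw [hcard] at hY
    -- first element
    have h0 : c' ∈ Y := by rw [hY, mem_apSet]; exact ⟨0, by omega, by ring⟩
    have h1 : c' + d' ∈ Y := by rw [hY, mem_apSet]; exact ⟨1, by omega, by ring⟩
    have hlast : c' + (s-1)*d' ∈ Y := by rw [hY, mem_apSet]; exact ⟨s-1, by omega, by ring⟩
    obtain ⟨a, haN, ha⟩ := mem_apSet.mp (hsub h0)
    obtain ⟨a1, ha1N, ha1⟩ := mem_apSet.mp (hsub h1)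
    obtain ⟨j, hjN, hj⟩ := mem_apSet.mp (hsub hlast)
    have haa1 : a < a1 := by
      rcases Nat.lt_trichotomy a a1 with h | h | h
      · exact h
      · subst h; omega
      · have : a1 * d < a * d := (Nat.mul_lt_mul_right hd).2 h
        omega
    have hsubm : (a1 - a) * d = a1 * d - a * d := Nat.sub_mul a1 a d
    have hd'eq : d' = (a1 - a) * d := by omega
    refine ⟨a, a1 - a, by omega, ?_, ?_⟩
    · have key : c + (a + (s-1)*(a1-a)) * d = c + j * d := by
        rw [← hj, ha, hd'eq]; try ring
      have : a + (s-1)*(a1-a) = j :=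
        Nat.eq_of_mul_eq_mul_right hd (by omega)
      omega
    · rw [hY, hd'eq, ha]
  · rintro ⟨a, e, he, hbound, hY⟩
    have hed : 0 < e * d := by positivity
    refine ⟨?_, ?_, ?_⟩
    · intro x hx
      rw [hY, mem_apSet] at hx
      obtain ⟨t, ht, rfl⟩ := hx
      rw [mem_apSet]
      refine ⟨a + t*e, ?_, by ring⟩
      have h1 : t * e ≤ (s-1) * e := Nat.mul_le_mul_right e (by omega)
      have h2 : 1 * 1 ≤ (s-1) * e := Nat.mul_le_mul (by omega) he
      omega
    · rw [hY]; exact periodic_apSet _ _ _ hed hs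
    · rw [hY, card_apSet _ _ _ hed]

open Finset in
noncomputable def patF (N mm : ℕ) : Finset (ℕ × ℕ) :=
  (Finset.Icc 1 ((N-1)/mm)).biUnion (fun e => (Finset.range (N - mm*e)).image (fun a => (a, e)))

lemma mem_patF {N mm a e : ℕ} (hmm : 0 < mm) :
    (a, e) ∈ patF N mm ↔ 1 ≤ e ∧ a + mm*e ≤ N - 1 := by
  simp only [patF, Finset.mem_biUnion, Finset.mem_Icc, Finset.mem_image, Finset.mem_range,
    Prod.mk.injEq]
  constructor
  · rintro ⟨e', ⟨he1, he2⟩, a', ha', rfl, rfl⟩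
    have : e' * mm ≤ N - 1 := (Nat.le_div_iff_mul_le hmm).mp he2
    have hc : e' * mm = mm * e' := Nat.mul_comm _ _
    omega
  · rintro ⟨he, hb⟩
    refine ⟨e, ⟨he, (Nat.le_div_iff_mul_le hmm).mpr ?_⟩, a, ?_, rfl, rfl⟩
    · have hc : e * mm = mm * e := Nat.mul_comm _ _
      omega
    · have h2 : 1 * 1 ≤ mm * e := Nat.mul_le_mul hmm he
      omega

lemma card_patF (N mm : ℕ) :
    (patF N mm).card = ∑ e ∈ Finset.Icc 1 ((N-1)/mm), (N - mm*e) := by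
  rw [patF, Finset.card_biUnion]
  · refine Finset.sum_congr rfl fun e _ => ?_
    rw [Finset.card_image_of_injective _ (fun a b h => (Prod.mk.injEq _ _ _ _).mp h |>.1),
      Finset.card_range]
  · intro x _ y _ hxy
    simp only [Finset.disjoint_left, Finset.mem_image, Finset.mem_range]
    rintro p ⟨a, _, rfl⟩ ⟨b, _, h⟩
    exact hxy ((Prod.mk.injEq _ _ _ _).mp h).2.symm

lemma gauss_sum (N mm : ℕ) : ∀ E, mm * E ≤ N →
    2 * ∑ e ∈ Finset.Icc 1 E, (N - mm*e) = E * (2*N - mm*(E+1)) := by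
  intro E
  induction E with
  | zero => simp
  | succ E ih =>
    intro hE
    have hmono : mm * E ≤ mm * (E+1) := Nat.mul_le_mul_left mm (by omega)
    rw [show Finset.Icc 1 (E+1) = insert (E+1) (Finset.Icc 1 E) by
        ext x; simp only [Finset.mem_Icc, Finset.mem_insert]; omega,
      Finset.sum_insert (by simp), Nat.mul_add, ih (by omega)]
    have h3 : E*(2*N - mm*(E+1)) = 2*(E*N) - E*(mm*(E+1)) := by
      rw [Nat.mul_sub]; ring_nf
    have h4 : (E+1)*(2*N - mm*(E+1+1)) = (E+1)*(2*N) - (E+1)*(mm*(E+1+1)) :=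
      Nat.mul_sub _ _ _
    have h5 : (E+1)*(2*N) = 2*(E*N) + 2*N := by ring
    have h6 : (E+1)*(mm*(E+1+1)) = E*(mm*(E+1)) + mm*(E+1) + mm*E + mm := by ring
    have hD : mm*(E+1) = mm*E + mm := by ring
    have h7 : E*(mm*(E+1)) ≤ 2*(E*N) := by
      calc E*(mm*(E+1)) ≤ E*(2*N) := Nat.mul_le_mul_left E (by omega)
      _ = 2*(E*N) := by ring
    omega

lemma two_mul_card_patF {N mm : ℕ} (hmm : 1 ≤ mm) (hN : mm + 1 ≤ N) :
    2 * (patF N mm).card = (N / mm) * (N % mm + (N - mm)) := by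
  rw [card_patF]
  have hEb : mm * ((N-1)/mm) ≤ N - 1 := by
    rw [Nat.mul_comm]; exact Nat.div_mul_le_self (N-1) mm
  rw [gauss_sum N mm ((N-1)/mm) (by omega)]
  have hqr : N = mm * (N / mm) + N % mm := (Nat.div_add_mod N mm).symm
  have hrlt : N % mm < mm := Nat.mod_lt _ (by omega)
  set q := N / mm with hq
  set r := N % mm with hr
  have hq1 : 1 ≤ q := by
    rw [hq]; exact Nat.one_le_div_iff (by omega) |>.mpr (by omega)
  rcases Nat.eq_zero_or_pos r with h0 | hpos
  · -- r = 0, E = q - 1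
    have hEeq : (N-1)/mm = q - 1 := by
      apply Nat.div_eq_of_lt_le
      · have : (q-1)*mm = mm*q - mm := by rw [Nat.sub_mul, one_mul, Nat.mul_comm]
        omega
      · have : (q-1+1)*mm = mm*q := by rw [show q-1+1 = q by omega, Nat.mul_comm]
        omega
    rw [hEeq, show q-1+1 = q by omega]
    have e1 : (q-1)*(2*N - mm*q) = (q-1)*(2*N) - (q-1)*(mm*q) := Nat.mul_sub _ _ _
    have e3 : (q-1)*(2*N) = 2*(q*N) - 1*(2*N) := by rw [Nat.sub_mul]; ring_nf
    have e4 : (q-1)*(mm*q) = q*(mm*q) - 1*(mm*q) := Nat.sub_mul _ _ _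
    have e5 : q*(r + (N-mm)) = q*r + (q*N - q*mm) := by
      rw [← Nat.mul_sub]; ring
    have e6 : q*N = q*(mm*q) + q*r := by rw [hqr]; ring
    have e7 : 1*(2*N) ≤ 2*(q*N) := by
      have : 1*N ≤ q*N := Nat.mul_le_mul_right N hq1
      omega
    have e8 : 1*(mm*q) ≤ q*(mm*q) := Nat.mul_le_mul_right _ hq1
    have e9 : q*mm ≤ q*N := Nat.mul_le_mul_left q (by omega)
    have e10 : q*mm = mm*q := Nat.mul_comm _ _
    omega
  · have hEeq : (N-1)/mm = q := by
      apply Nat.div_eq_of_lt_le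
      · have : q*mm = mm*q := Nat.mul_comm _ _
        omega
      · have : (q+1)*mm = mm*q + mm := by ring
        omega
    rw [hEeq]
    have e1 : q*(2*N - mm*(q+1)) = q*(2*N) - q*(mm*(q+1)) := Nat.mul_sub _ _ _
    have e2 : q*(mm*(q+1)) = q*(mm*q) + q*mm := by ring
    have e3 : q*(2*N) = 2*(q*(mm*q)) + 2*(q*r) := by rw [hqr]; ring
    have e5 : q*(r + (N-mm)) = q*r + (q*N - q*mm) := by rw [← Nat.mul_sub]; ring
    have e7 : q*N = q*(mm*q) + q*r := by rw [hqr]; ring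
    have e9 : q*mm ≤ q*N := Nat.mul_le_mul_left q (by omega)
    omega

open scoped Classical in
noncomputable def persub (C : Finset ℕ) (s : ℕ) : Finset (Finset ℕ) :=
  C.powerset.filter (fun Y => PeriodicSet Y ∧ Y.card = s)

lemma mem_persub {C : Finset ℕ} {s : ℕ} {Y : Finset ℕ} :
    Y ∈ persub C s ↔ Y ⊆ C ∧ PeriodicSet Y ∧ Y.card = s := by
  classical
  simp [persub, Finset.mem_filter, Finset.mem_powerset]

lemma card_persub_apSet {c d N mm : ℕ} (hd : 0 < d) (hmm : 1 ≤ mm) (hN : mm + 1 ≤ N) :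
    (persub (apSet c d N) (mm+1)).card = (patF N mm).card := by
  symm
  apply Finset.card_bij (fun p _ => apSet (c + p.1*d) (p.2*d) (mm+1))
  · rintro ⟨a,e⟩ hp
    rw [mem_patF hmm] at hp
    rw [mem_persub]
    have h := (subAP hd (by omega : 2 ≤ mm+1) (apSet (c+a*d) (e*d) (mm+1))).mpr
      ⟨a, e, hp.1, by simpa using hp.2, rfl⟩
    exact ⟨h.1, h.2.1, h.2.2⟩
  · rintro ⟨a,e⟩ hp ⟨a',e'⟩ hp' heq
    rw [mem_patF hmm] at hp hp'
    obtain ⟨hc, hdd⟩ := apSet_inj (Nat.mul_pos (by omega : 0 < e) hd)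
      (Nat.mul_pos (by omega : 0 < e') hd) (by omega) heq
    have hc2 : c + a * d = c + a' * d := hc
    have hdd2 : e * d = e' * d := hdd
    have h1 : a = a' := Nat.eq_of_mul_eq_mul_right hd (by omega)
    have h2 : e = e' := Nat.eq_of_mul_eq_mul_right hd hdd2
    simp [h1, h2]
  · intro Y hY
    rw [mem_persub] at hY
    obtain ⟨a, e, he, hb, hYeq⟩ := (subAP hd (by omega : 2 ≤ mm+1) Y).mp ⟨hY.1, hY.2.1, hY.2.2⟩
    exact ⟨(a,e), (mem_patF hmm).mpr ⟨he, by simpa using hb⟩, hYeq.symm⟩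

-- counting words
noncomputable def permsOf (T : Finset ℕ) : Finset (List ℕ) :=
  (T.sort (· ≤ ·)).permutations.toFinset

lemma mem_permsOf {T : Finset ℕ} {v : List ℕ} :
    v ∈ permsOf T ↔ v.Nodup ∧ v.toFinset = T := by
  rw [permsOf, List.mem_toFinset, List.mem_permutations]
  constructor
  · intro h
    exact ⟨h.nodup_iff.mpr (Finset.sort_nodup _ _),
      (List.toFinset_eq_of_perm _ _ h).trans (Finset.sort_toFinset _ _)⟩
  · rintro ⟨hnd, hT⟩
    exact List.perm_of_nodup_nodup_toFinset_eq hnd (Finset.sort_nodup _ _)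
      (hT.trans (Finset.sort_toFinset _ _).symm)

lemma card_permsOf (T : Finset ℕ) : (permsOf T).card = Nat.factorial T.card := by
  rw [permsOf, List.card_toFinset,
    (List.nodup_permutations _ (Finset.sort_nodup _ _)).dedup,
    List.length_permutations, Finset.length_sort]

noncomputable def goodSuf (C : Finset ℕ) (t : ℕ) : Finset (List ℕ) :=
  (persub C (C.card - t)).biUnion (fun Y => permsOf (C \ Y))

lemma mem_goodSuf {C : Finset ℕ} {t : ℕ} (ht : t ≤ C.card) {v : List ℕ} :
    v ∈ goodSuf C t ↔
      v.Nodup ∧ v.toFinset ⊆ C ∧ v.length = t ∧ PeriodicSet (C \ v.toFinset) := by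
  rw [goodSuf, Finset.mem_biUnion]
  constructor
  · rintro ⟨Y, hY, hv⟩
    rw [mem_persub] at hY
    rw [mem_permsOf] at hv
    obtain ⟨hYC, hYper, hYcard⟩ := hY
    obtain ⟨hnd, hvT⟩ := hv
    have hsd : C \ (C \ Y) = Y := Finset.sdiff_sdiff_eq_self hYC
    refine ⟨hnd, hvT ▸ Finset.sdiff_subset, ?_, by rw [hvT, hsd]; exact hYper⟩
    rw [← List.toFinset_card_of_nodup hnd, hvT, Finset.card_sdiff_of_subset hYC, hYcard]
    omega
  · rintro ⟨hnd, hvC, hvlen, hper⟩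
    refine ⟨C \ v.toFinset, ?_, ?_⟩
    · rw [mem_persub]
      refine ⟨Finset.sdiff_subset, hper, ?_⟩
      rw [Finset.card_sdiff_of_subset hvC, List.toFinset_card_of_nodup hnd, hvlen]
    · rw [mem_permsOf]
      exact ⟨hnd, (Finset.sdiff_sdiff_eq_self hvC).symm⟩

lemma card_goodSuf {C : Finset ℕ} {t : ℕ} (ht : t ≤ C.card) :
    (goodSuf C t).card = (persub C (C.card - t)).card * Nat.factorial t := by
  rw [goodSuf, Finset.card_biUnion]
  · have hterm : ∀ Y ∈ persub C (C.card - t), (permsOf (C \ Y)).card = Nat.factorial t := by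
      intro Y hY
      rw [mem_persub] at hY
      rw [card_permsOf, Finset.card_sdiff_of_subset hY.1, hY.2.2, Nat.sub_sub_self ht]
    rw [Finset.sum_congr rfl hterm, Finset.sum_const, smul_eq_mul]
  · intro Y hY Y' hY' hne
    rw [Finset.mem_coe, mem_persub] at hY hY'
    rw [Function.onFun, Finset.disjoint_left]
    intro v hv hv'
    rw [mem_permsOf] at hv hv'
    apply hne
    have := hv.2.symm.trans hv'.2
    have h1 := Finset.sdiff_sdiff_eq_self hY.1
    have h2 := Finset.sdiff_sdiff_eq_self hY'.1
    rw [← h1, ← h2, this]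

open scoped Classical in
noncomputable def DkF (n k : ℕ) : Finset (List ℕ) :=
  (goodSuf (Finset.Icc 1 n) k).filter
    (fun u => ∀ j, 1 ≤ j → j < k → ¬ PeriodicSet (Finset.Icc 1 n \ (u.take j).toFinset))

noncomputable def FiF (n i : ℕ) : Finset (List ℕ) := goodSuf (Finset.Icc 1 n) i

open scoped Classical in
noncomputable def GkF (n i k : ℕ) : Finset (List ℕ) :=
  (FiF n i).filter (fun w => w.take k ∈ DkF n k)

lemma card_Icc1n (n : ℕ) : (Finset.Icc 1 n).card = n := by
  rw [Nat.card_Icc]; omega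

lemma Icc_eq_apSet (n : ℕ) : Finset.Icc 1 n = apSet 1 1 n := by
  ext x
  simp only [Finset.mem_Icc, mem_apSet, Nat.mul_one]
  constructor
  · rintro ⟨h1, h2⟩; exact ⟨x-1, by omega, by omega⟩
  · rintro ⟨t, ht, rfl⟩; omega

lemma toFinset_subset_iff {u : List ℕ} {C : Finset ℕ} :
    u.toFinset ⊆ C ↔ ∀ x ∈ u, x ∈ C := by
  constructor
  · intro h x hx; exact h (List.mem_toFinset.mpr hx)
  · intro h x hx; exact h x (List.mem_toFinset.mp hx)

lemma mem_DkF {n k : ℕ} (hk : k ≤ n) {u : List ℕ} :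
    u ∈ DkF n k ↔ u.length = k ∧ MemD n u := by
  classical
  simp only [DkF, Finset.mem_filter, mem_goodSuf (show k ≤ (Finset.Icc 1 n).card by rw [card_Icc1n]; exact hk)]
  unfold MemD
  rw [toFinset_subset_iff]
  constructor
  · rintro ⟨⟨hnd, hsub, hlen, hper⟩, hpre⟩
    exact ⟨hlen, hnd, hsub, hper, fun j hj1 hj2 => hpre j hj1 (hlen ▸ hj2)⟩
  · rintro ⟨hlen, hnd, hsub, hper, hpre⟩
    exact ⟨⟨hnd, hsub, hlen, hper⟩, fun j hj1 hj2 => hpre j hj1 (hlen ▸ hj2)⟩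

lemma card_fiber {n i k : ℕ} (hk1 : 1 ≤ k) (hki : k ≤ i) (hin : i ≤ n) {u : List ℕ}
    (hu : u ∈ DkF n k) :
    ((FiF n i).filter (fun w => w.take k = u)).card
      = (goodSuf (Finset.Icc 1 n \ u.toFinset) (i-k)).card := by
  classical
  obtain ⟨hulen, hund, husub, huper, -⟩ := (mem_DkF (le_trans hki hin)).mp hu
  have hucard : u.toFinset.card = k := by
    rw [List.toFinset_card_of_nodup hund, hulen]
  have husub' : u.toFinset ⊆ Finset.Icc 1 n := toFinset_subset_iff.mpr husub
  have hCcard : (Finset.Icc 1 n \ u.toFinset).card = n - k := by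
    rw [Finset.card_sdiff_of_subset husub', card_Icc1n, hucard]
  have hik : i - k ≤ (Finset.Icc 1 n \ u.toFinset).card := by rw [hCcard]; omega
  have hsd : ∀ v : List ℕ, (Finset.Icc 1 n \ u.toFinset) \ v.toFinset
      = Finset.Icc 1 n \ (u ++ v).toFinset := by
    intro v
    ext x
    simp only [Finset.mem_sdiff, List.toFinset_append, Finset.mem_union, List.mem_toFinset]
    tauto
  apply Finset.card_bij' (fun w _ => w.drop k) (fun v _ => u ++ v)
  · intro w hw
    rw [Finset.mem_filter] at hw
    obtain ⟨hwF, hwtake⟩ := hw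
    rw [FiF, mem_goodSuf (by rw [card_Icc1n]; omega)] at hwF
    obtain ⟨hwnd, hwsub, hwlen, hwper⟩ := hwF
    have hweq : u ++ w.drop k = w := by rw [← hwtake, List.take_append_drop]
    rw [mem_goodSuf hik]
    have hwnd' : (u ++ w.drop k).Nodup := by rw [hweq]; exact hwnd
    obtain ⟨-, hdnd, hdisj⟩ := List.nodup_append'.mp hwnd'
    refine ⟨hdnd, ?_, ?_, ?_⟩
    · rw [toFinset_subset_iff]
      intro x hx
      rw [Finset.mem_sdiff]
      constructor
      · exact toFinset_subset_iff.mp hwsub x (by rw [← hweq]; exact List.mem_append_right _ hx)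
      · rw [List.mem_toFinset]
        intro hxu
        exact hdisj hxu hx
    · rw [List.length_drop, hwlen]
    · rw [hsd, hweq]; exact hwper
  · intro v hv
    rw [mem_goodSuf hik] at hv
    obtain ⟨hvnd, hvsub, hvlen, hvper⟩ := hv
    rw [Finset.mem_filter]
    have hvIcc : ∀ x ∈ v, x ∈ Finset.Icc 1 n := by
      intro x hx
      have := toFinset_subset_iff.mp hvsub x hx
      exact (Finset.mem_sdiff.mp this).1
    have hdisj : u.Disjoint v := by
      intro a hau hav
      have := toFinset_subset_iff.mp hvsub a hav
      rw [Finset.mem_sdiff, List.mem_toFinset] at this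
      exact this.2 hau
    constructor
    · rw [FiF, mem_goodSuf (by rw [card_Icc1n]; omega)]
      refine ⟨List.nodup_append'.mpr ⟨hund, hvnd, hdisj⟩, ?_, ?_, ?_⟩
      · rw [toFinset_subset_iff]
        intro x hx
        rcases List.mem_append.mp hx with h | h
        · exact husub x h
        · exact hvIcc x h
      · rw [List.length_append, hulen, hvlen]; omega
      · rw [← hsd]; exact hvper
    · exact List.take_left' hulen
  · intro w hw
    rw [Finset.mem_filter] at hw
    rw [← hw.2, List.take_append_drop]
  · intro v _
    exact List.drop_left' hulen

lemma FiF_eq_biUnion {n i : ℕ} (hi : 1 ≤ i) (hin : i ≤ n) :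
    FiF n i = (Finset.Icc 1 i).biUnion (fun k => GkF n i k) := by
  classical
  apply Finset.Subset.antisymm
  · intro w hw
    have hwF := hw
    rw [FiF, mem_goodSuf (by rw [card_Icc1n]; exact hin)] at hwF
    obtain ⟨hwnd, hwsub, hwlen, hwper⟩ := hwF
    set S := (Finset.Icc 1 i).filter
      (fun j => PeriodicSet (Finset.Icc 1 n \ (w.take j).toFinset)) with hS
    have hiS : i ∈ S := by
      rw [hS, Finset.mem_filter, Finset.mem_Icc]
      refine ⟨⟨hi, le_refl i⟩, ?_⟩
      rw [← hwlen, List.take_length]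
      exact hwper
    have hSne : S.Nonempty := ⟨i, hiS⟩
    set k := S.min' hSne with hk
    have hkS : k ∈ S := S.min'_mem hSne
    rw [hS, Finset.mem_filter, Finset.mem_Icc] at hkS
    obtain ⟨⟨hk1, hki⟩, hkper⟩ := hkS
    rw [Finset.mem_biUnion]
    refine ⟨k, Finset.mem_Icc.mpr ⟨hk1, hki⟩, ?_⟩
    rw [GkF, Finset.mem_filter]
    refine ⟨hw, ?_⟩
    rw [mem_DkF (le_trans hki hin)]
    have htlen : (w.take k).length = k := by
      rw [List.length_take, hwlen]; omega
    refine ⟨htlen, (List.take_sublist k w).nodup hwnd, ?_, hkper, ?_⟩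
    · intro x hx
      exact toFinset_subset_iff.mp hwsub x ((List.take_sublist k w).mem hx)
    · intro j hj1 hj2
      rw [htlen] at hj2
      rw [List.take_take, min_eq_left (le_of_lt hj2)]
      intro hper
      have hjS : j ∈ S := by
        rw [hS, Finset.mem_filter, Finset.mem_Icc]
        exact ⟨⟨hj1, by omega⟩, hper⟩
      have := S.min'_le j hjS
      omega
  · intro w hw
    rw [Finset.mem_biUnion] at hw
    obtain ⟨k, _, hk⟩ := hw
    exact (Finset.mem_filter.mp hk).1

lemma GkF_disjoint {n i : ℕ} (hin : i ≤ n) :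
    ∀ k ∈ Finset.Icc 1 i, ∀ k' ∈ Finset.Icc 1 i, k ≠ k' →
      Disjoint (GkF n i k) (GkF n i k') := by
  classical
  have key : ∀ k k', k ∈ Finset.Icc 1 i → k' ∈ Finset.Icc 1 i → k < k' →
      Disjoint (GkF n i k) (GkF n i k') := by
    intro k k' hkm hkm' hlt
    rw [Finset.mem_Icc] at hkm hkm'
    rw [Finset.disjoint_left]
    intro w hw hw'
    rw [GkF, Finset.mem_filter] at hw hw'
    have hu := (mem_DkF (le_trans hkm.2 hin)).mp hw.2
    have hu' := (mem_DkF (le_trans hkm'.2 hin)).mp hw'.2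
    obtain ⟨hlen', -, -, -, hpre'⟩ := hu'
    have := hpre' k hkm.1 (by omega)
    rw [List.take_take, min_eq_left (le_of_lt hlt)] at this
    exact this hu.2.2.2.1
  intro k hk k' hk' hne
  rcases Nat.lt_or_ge k k' with h | h
  · exact key k k' hk hk' h
  · exact (key k' k hk' hk (by omega)).symm

lemma card_GkF {n i k m : ℕ} (hm : m = n - i - 1) (hk1 : 1 ≤ k) (hki : k ≤ i)
    (hi : 1 ≤ i) (hin : i ≤ n - 2) (hn : 4 ≤ n) :
    (GkF n i k).card = (DkF n k).card * ((patF (n-k) m).card * Nat.factorial (i-k)) := by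
  classical
  have hinn : i ≤ n := by omega
  have hsum := Finset.card_eq_sum_card_fiberwise (f := fun w : List ℕ => w.take k)
    (s := GkF n i k) (t := DkF n k)
    (fun w hw => (Finset.mem_filter.mp ((by rw [GkF] at hw; exact hw) : w ∈ (FiF n i).filter (fun w => w.take k ∈ DkF n k))).2)
  rw [hsum]
  have hterm : ∀ u ∈ DkF n k,
      ((GkF n i k).filter (fun w => w.take k = u)).card
        = (patF (n-k) m).card * Nat.factorial (i-k) := by
    intro u hu
    have hflt : (GkF n i k).filter (fun w => w.take k = u)
        = (FiF n i).filter (fun w => w.take k = u) := by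
      ext w
      simp only [GkF, Finset.mem_filter, and_assoc]
      constructor
      · rintro ⟨h1, h2, h3⟩; exact ⟨h1, h3⟩
      · rintro ⟨h1, h3⟩; exact ⟨h1, h3 ▸ hu, h3⟩
    rw [hflt, card_fiber hk1 hki hinn hu]
    obtain ⟨hulen, hund, husub, huper, -⟩ := (mem_DkF (le_trans hki hinn)).mp hu
    have hucard : (Finset.Icc 1 n \ u.toFinset).card = n - k := by
      rw [Finset.card_sdiff_of_subset (toFinset_subset_iff.mpr husub), card_Icc1n,
        List.toFinset_card_of_nodup hund, hulen]
    obtain ⟨hc2, c, d, hd, hCeq⟩ := periodic_iff.mp huper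
    rw [hucard] at hCeq
    rw [card_goodSuf (by rw [hucard]; omega), hucard]
    have : n - k - (i - k) = m + 1 := by omega
    rw [this, hCeq, card_persub_apSet hd (by omega) (by omega)]
  rw [Finset.sum_congr rfl hterm, Finset.sum_const, smul_eq_mul]

theorem stmt6 (n i : ℕ) (hn : 4 ≤ n) (hi : 1 ≤ i) (hin : i ≤ n - 2) :
    ∑ k ∈ Finset.Icc 1 i,
        ((n - k) / (n - i - 1)) * ((n - k) % (n - i - 1) + (i - k) + 1) *
          Nat.card {u : List ℕ | u.length = k ∧ MemD n u} * Nat.factorial (i - k) =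
      (n / (n - i - 1)) * (n % (n - i - 1) + i + 1) * Nat.factorial i := by
  classical
  set m := n - i - 1 with hm
  have hm1 : 1 ≤ m := by omega
  have hinn : i ≤ n := by omega
  have hD : ∀ k, 1 ≤ k → k ≤ i →
      Nat.card {u : List ℕ | u.length = k ∧ MemD n u} = (DkF n k).card := by
    intro k hk1 hki
    have hset : {u : List ℕ | u.length = k ∧ MemD n u} = ↑(DkF n k) := by
      ext u
      rw [Set.mem_setOf_eq, Finset.mem_coe, mem_DkF (by omega)]
    rw [hset, Nat.card_coe_set_eq, Set.ncard_coe_finset]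
  have hFi : 2 * (FiF n i).card = (n / m) * (n % m + i + 1) * Nat.factorial i := by
    rw [FiF, card_goodSuf (by rw [card_Icc1n]; omega), card_Icc1n]
    have h1 : n - i = m + 1 := by omega
    rw [h1, Icc_eq_apSet, card_persub_apSet (by norm_num) hm1 (by omega),
      ← Nat.mul_assoc, two_mul_card_patF hm1 (by omega)]
    have h2 : n - m = i + 1 := by omega
    rw [h2, ← Nat.add_assoc]
  have hpart : (FiF n i).card = ∑ k ∈ Finset.Icc 1 i, (GkF n i k).card := by
    rw [FiF_eq_biUnion hi hinn, Finset.card_biUnion (GkF_disjoint hinn)]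
  have hterm : ∀ k ∈ Finset.Icc 1 i,
      ((n - k) / m) * ((n - k) % m + (i - k) + 1) *
          Nat.card {u : List ℕ | u.length = k ∧ MemD n u} * Nat.factorial (i - k)
        = 2 * (GkF n i k).card := by
    intro k hk
    rw [Finset.mem_Icc] at hk
    have hco : ((n-k)/m) * ((n-k)%m + (i-k)+1) = 2 * (patF (n-k) m).card := by
      rw [two_mul_card_patF hm1 (by omega : m+1 ≤ n-k)]
      have h3 : (n-k) - m = (i-k)+1 := by omega
      rw [h3]; ring
    rw [hD k hk.1 hk.2, card_GkF hm hk.1 hk.2 hi hin hn, hco]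
    ring
  rw [Finset.sum_congr rfl hterm, ← Finset.mul_sum, ← hpart, hFi]
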